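/- Subtree ordering of optimal trees: if T* is a minimum-sum-energy tree among all trees with N leaves and sum depth ν (over the M-ASK alphabet), and T_j denotes the subtree rooted at the j-th child of the root with N_j leaves, then N_1 ≥ N_2 ≥ ... ≥ N_J; i.e., subtree sizes are non-increasing in the edge index. -/

import Mathlib

/-- Ordered rooted trees: a node with a (possibly empty) ordered list of children. -/
inductive RTree where
  | node : List RTree → RTree

mutual
  /-- The list of depths of all leaves of the tree (in left-to-right order). -/
  def RTree.leafDepths : RTree → List ℕ
    | .node [] => [0]
    | .node (c :: cs) => RTree.leafDepthsAux (c :: cs)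
  /-- Leaf depths of a forest, viewed as the children of a common root. -/
  def RTree.leafDepthsAux : List RTree → List ℕ
    | [] => []
    | t :: ts => (RTree.leafDepths t).map (· + 1) ++ RTree.leafDepthsAux ts
end

/-- Number of leaves. -/
def RTree.numLeaves (t : RTree) : ℕ := t.leafDepths.length

/-- Height: the maximum leaf depth. -/
def RTree.height (t : RTree) : ℕ := t.leafDepths.foldr max 0

/-- Sum depth: total of all leaf depths. -/
def RTree.sumDepth (t : RTree) : ℕ := t.leafDepths.sum

mutual
  /-- Energies of all leaves over the M-ASK alphabet: the `j`-th edge (0-based)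
  from any node carries symbol `2j+1` of energy `(2j+1)²`, and a leaf's energy is
  the sum of squared symbols along its root-to-leaf path. -/
  def RTree.leafEnergies : RTree → List ℕ
    | .node [] => [0]
    | .node (c :: cs) => RTree.leafEnergiesAux 0 (c :: cs)
  def RTree.leafEnergiesAux : ℕ → List RTree → List ℕ
    | _, [] => []
    | j, t :: ts => (RTree.leafEnergies t).map (· + (2 * j + 1) ^ 2)
        ++ RTree.leafEnergiesAux (j + 1) ts
end

/-- Sum energy: total of all leaf energies. -/
def RTree.sumEnergy (t : RTree) : ℕ := t.leafEnergies.sum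

/-- Every node has at most `M` children. -/
inductive RTree.MaxDeg (M : ℕ) : RTree → Prop
  | node (cs : List RTree) (hlen : cs.length ≤ M)
      (hc : ∀ t ∈ cs, RTree.MaxDeg M t) : RTree.MaxDeg M (.node cs)

/-- A `2⁺`-tree: every internal (non-leaf) node has at least two children. -/
inductive RTree.MinDeg2 : RTree → Prop
  | node (cs : List RTree) (hlen : cs.length ≠ 1)
      (hc : ∀ t ∈ cs, RTree.MinDeg2 t) : RTree.MinDeg2 (.node cs)

/-- Full binary trees: every internal node has exactly two ordered children. -/
inductive RTree.FullBin : RTree → Prop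
  | leaf : RTree.FullBin (.node [])
  | node (a b : RTree) : RTree.FullBin a → RTree.FullBin b →
      RTree.FullBin (.node [a, b])

mutual
theorem len_energies : ∀ t : RTree, (RTree.leafEnergies t).length = (RTree.leafDepths t).length
  | .node [] => rfl
  | .node (c :: cs) => len_energiesAux 0 (c :: cs)
theorem len_energiesAux : ∀ (j : ℕ) (ts : List RTree),
    (RTree.leafEnergiesAux j ts).length = (RTree.leafDepthsAux ts).length
  | _, [] => rfl
  | j, t :: ts => by
      simp [RTree.leafEnergiesAux, RTree.leafDepthsAux, len_energies t, len_energiesAux (j+1) ts]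
end

theorem depthsAux_append (l₁ l₂ : List RTree) :
    RTree.leafDepthsAux (l₁ ++ l₂) = RTree.leafDepthsAux l₁ ++ RTree.leafDepthsAux l₂ := by
  induction l₁ with
  | nil => simp [RTree.leafDepthsAux]
  | cons t ts ih => simp [RTree.leafDepthsAux, ih]

theorem energiesAux_append (j : ℕ) (l₁ l₂ : List RTree) :
    RTree.leafEnergiesAux j (l₁ ++ l₂) =
      RTree.leafEnergiesAux j l₁ ++ RTree.leafEnergiesAux (j + l₁.length) l₂ := by
  induction l₁ generalizing j with
  | nil => simp [RTree.leafEnergiesAux]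
  | cons t ts ih =>
      simp only [List.cons_append, RTree.leafEnergiesAux, ih (j+1), List.length_cons,
        List.append_assoc]
      rw [show j + 1 + ts.length = j + (ts.length + 1) by omega]

theorem sum_map_add (l : List ℕ) (c : ℕ) : (l.map (· + c)).sum = l.sum + c * l.length := by
  induction l with
  | nil => simp
  | cons x xs ih => simp [ih]; ring

theorem energiesAux_cons_sum (j : ℕ) (t : RTree) (ts : List RTree) :
    (RTree.leafEnergiesAux j (t :: ts)).sum =
      t.sumEnergy + (2*j+1)^2 * t.numLeaves + (RTree.leafEnergiesAux (j+1) ts).sum := by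
  simp [RTree.leafEnergiesAux, sum_map_add, RTree.sumEnergy, RTree.numLeaves, len_energies, Nat.mul_comm]

theorem depthsAux_cons_sum (t : RTree) (ts : List RTree) :
    (RTree.leafDepthsAux (t :: ts)).sum =
      t.sumDepth + t.numLeaves + (RTree.leafDepthsAux ts).sum := by
  simp [RTree.leafDepthsAux, sum_map_add, RTree.sumDepth, RTree.numLeaves]

theorem depthsAux_cons_len (t : RTree) (ts : List RTree) :
    (RTree.leafDepthsAux (t :: ts)).length = t.numLeaves + (RTree.leafDepthsAux ts).length := by
  simp [RTree.leafDepthsAux, RTree.numLeaves]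

theorem leafDepths_ne_nil (ls : List RTree) (h : ls ≠ []) :
    (RTree.node ls).leafDepths = RTree.leafDepthsAux ls := by
  cases ls with
  | nil => exact absurd rfl h
  | cons c cs => rfl

theorem leafEnergies_ne_nil (ls : List RTree) (h : ls ≠ []) :
    (RTree.node ls).leafEnergies = RTree.leafEnergiesAux 0 ls := by
  cases ls with
  | nil => exact absurd rfl h
  | cons c cs => rfl

theorem key_lemma (l₁ l₂ l₃ : List RTree) (a b : RTree)
    (hopt : ∀ t' : RTree, t'.numLeaves = (RTree.node (l₁ ++ a :: (l₂ ++ b :: l₃))).numLeaves →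
        t'.sumDepth = (RTree.node (l₁ ++ a :: (l₂ ++ b :: l₃))).sumDepth →
        (RTree.node (l₁ ++ a :: (l₂ ++ b :: l₃))).sumEnergy ≤ t'.sumEnergy) :
    b.numLeaves ≤ a.numLeaves := by
  set L := l₁ ++ a :: (l₂ ++ b :: l₃) with hL
  set L' := l₁ ++ b :: (l₂ ++ a :: l₃) with hL'
  have hLne : L ≠ [] := by cases l₁ <;> simp [hL]
  have hL'ne : L' ≠ [] := by cases l₁ <;> simp [hL']
  have hda : RTree.leafDepthsAux L = RTree.leafDepthsAux l₁ ++
      ((a.leafDepths.map (· + 1)) ++ (RTree.leafDepthsAux l₂ ++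
        ((b.leafDepths.map (· + 1)) ++ RTree.leafDepthsAux l₃))) := by
    simp [hL, depthsAux_append, RTree.leafDepthsAux]
  have hda' : RTree.leafDepthsAux L' = RTree.leafDepthsAux l₁ ++
      ((b.leafDepths.map (· + 1)) ++ (RTree.leafDepthsAux l₂ ++
        ((a.leafDepths.map (· + 1)) ++ RTree.leafDepthsAux l₃))) := by
    simp [hL', depthsAux_append, RTree.leafDepthsAux]
  have hnl : (RTree.node L').numLeaves = (RTree.node L).numLeaves := by
    simp [RTree.numLeaves, leafDepths_ne_nil _ hLne, leafDepths_ne_nil _ hL'ne, hda, hda']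
    omega
  have hsd : (RTree.node L').sumDepth = (RTree.node L).sumDepth := by
    simp [RTree.sumDepth, leafDepths_ne_nil _ hLne, leafDepths_ne_nil _ hL'ne, hda, hda']
    omega
  have hE := hopt (RTree.node L') hnl hsd
  -- expand energies
  set i := l₁.length with hi
  set jj := i + 1 + l₂.length with hjj
  have expand : ∀ (x y : RTree), (RTree.leafEnergiesAux 0 (l₁ ++ x :: (l₂ ++ y :: l₃))).sum =
      (RTree.leafEnergiesAux 0 l₁).sum + (x.sumEnergy + (2*i+1)^2 * x.numLeaves) +
      ((RTree.leafEnergiesAux (i+1) l₂).sum + (y.sumEnergy + (2*jj+1)^2 * y.numLeaves)) +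
      (RTree.leafEnergiesAux (jj+1) l₃).sum := by
    intro x y
    rw [energiesAux_append]
    simp only [List.sum_append]
    rw [energiesAux_cons_sum]
    rw [show (0 + l₁.length) = i by omega]
    rw [energiesAux_append]
    simp only [List.sum_append]
    rw [energiesAux_cons_sum]
    rw [show (i + 1 + l₂.length) = jj from rfl]
    ring
  have hEL : (RTree.node L).sumEnergy = (RTree.leafEnergiesAux 0 L).sum := by
    rw [RTree.sumEnergy, leafEnergies_ne_nil _ hLne]
  have hEL' : (RTree.node L').sumEnergy = (RTree.leafEnergiesAux 0 L').sum := by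
    rw [RTree.sumEnergy, leafEnergies_ne_nil _ hL'ne]
  rw [hEL, hEL', hL, hL', expand a b, expand b a] at hE
  have hij : (2*i+1)^2 < (2*jj+1)^2 := by
    have : i < jj := by omega
    nlinarith
  nlinarith [hE, hij]


/-- Subtree ordering of optimal trees. If `T* = node cs` is a
minimum-sum-energy tree among all trees with the same number of leaves and sum
depth, then the numbers of leaves of the subtrees rooted at the children of the
root are non-increasing in the edge index. -/
theorem optimal_tree_subtree_sizes_nonincreasing (cs : List RTree)
    (hopt : ∀ t' : RTree, t'.numLeaves = (RTree.node cs).numLeaves →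
        t'.sumDepth = (RTree.node cs).sumDepth →
        (RTree.node cs).sumEnergy ≤ t'.sumEnergy)
    (i j : ℕ) (hij : i < j) (hj : j < cs.length) :
    (cs.get ⟨j, hj⟩).numLeaves ≤ (cs.get ⟨i, hij.trans hj⟩).numLeaves := by
  have hi : i < cs.length := hij.trans hj
  have hdecomp : cs = cs.take i ++ cs[i] ::
      ((cs.drop (i+1)).take (j - (i+1)) ++ cs[j] :: cs.drop (j+1)) := by
    conv_lhs => rw [← List.take_append_drop i cs]
    rw [List.drop_eq_getElem_cons hi]
    congr 1
    congr 1
    conv_lhs => rw [← List.take_append_drop (j - (i+1)) (cs.drop (i+1))]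
    congr 1
    rw [List.drop_drop, show i + 1 + (j - (i+1)) = j by omega,
      List.drop_eq_getElem_cons hj]
  have := key_lemma (cs.take i) ((cs.drop (i+1)).take (j - (i+1))) (cs.drop (j+1))
    cs[i] cs[j] (by rw [← hdecomp]; exact hopt)
  simpa using this
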